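/- arXiv:2311.04630 — 3 statements merged into one kernel-verified Lean document; each statement's English description precedes it below -/
import Mathlib

section
/- Let Γ be an abelian group and Ψ : Γ × Γ → 𝕋 a normalised 2-cocycle. Define Υ(γ₁,γ₂) := conj(Ψ(-γ₁, γ₁+γ₂)) and Ψ̊(γ₁,γ₂) := Ψ(γ₁, -γ₁-γ₂). Then for all x₁, x₂, x₃ ∈ Γ: Υ(x₂, x₁+x₃) · conj(Υ(x₁+x₂, x₃)) = conj(Ψ(x₁,x₃)) · Ψ̊(x₁,x₂). -/
/-- For a normalised circle-valued 2-cocycle `Ψ` on an abelian group, with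
`Υ(γ₁,γ₂) := conj(Ψ(-γ₁,γ₁+γ₂))` and `Ψ̊(γ₁,γ₂) := Ψ(γ₁,-γ₁-γ₂)`, one has
`Υ(x₂,x₁+x₃) · conj(Υ(x₁+x₂,x₃)) = conj(Ψ(x₁,x₃)) · Ψ̊(x₁,x₂)`. -/
theorem stmt9 {Γ : Type*} [AddCommGroup Γ] (Ψ Υ Ψring : Γ → Γ → ℂ)
    (hmod : ∀ a b, ‖Ψ a b‖ = 1)
    (hcoc : ∀ a b c, Ψ a b * Ψ (a + b) c = Ψ b c * Ψ a (b + c))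
    (hnorm : ∀ γ : Γ, Ψ 0 γ = 1 ∧ Ψ γ 0 = 1)
    (hΥ : ∀ a b, Υ a b = (starRingEnd ℂ) (Ψ (-a) (a + b)))
    (hring : ∀ a b, Ψring a b = Ψ a (-a - b)) :
    ∀ x₁ x₂ x₃ : Γ, Υ x₂ (x₁ + x₃) * (starRingEnd ℂ) (Υ (x₁ + x₂) x₃) =
      (starRingEnd ℂ) (Ψ x₁ x₃) * Ψring x₁ x₂ := by
  have hunit : ∀ a b, Ψ a b * (starRingEnd ℂ) (Ψ a b) = 1 := by
    intro a b
    rw [Complex.mul_conj, Complex.normSq_eq_norm_sq, hmod]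
    norm_num
  intro x₁ x₂ x₃
  have key := hcoc x₁ (-x₁ - x₂) (x₁ + x₂ + x₃)
  rw [show x₁ + (-x₁ - x₂) = -x₂ by abel,
      show -x₁ - x₂ + (x₁ + x₂ + x₃) = x₃ by abel] at key
  rw [hΥ, hΥ, hring, Complex.conj_conj,
      show x₂ + (x₁ + x₃) = x₁ + x₂ + x₃ by abel,
      show x₁ + x₂ + x₃ = x₁ + x₂ + x₃ by rfl]
  set A := Ψ (-x₂) (x₁ + x₂ + x₃) with hA
  have hB : Ψ (-(x₁ + x₂)) (x₁ + x₂ + x₃) = Ψ (-x₁ - x₂) (x₁ + x₂ + x₃) := by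
    rw [show -(x₁ + x₂) = -x₁ - x₂ by abel]
  rw [hB]
  set B := Ψ (-x₁ - x₂) (x₁ + x₂ + x₃) with hBdef
  set C := Ψ x₁ x₃ with hC
  set D := Ψ x₁ (-x₁ - x₂) with hD
  have u := hunit (-x₂) (x₁ + x₂ + x₃)
  have v := hunit x₁ x₃
  -- key : D * A = B * C ; goal : conj A * B = conj C * D
  linear_combination (- (starRingEnd ℂ) A * (starRingEnd ℂ) C) * key
    + ((starRingEnd ℂ) C * D) * u + (- (starRingEnd ℂ) A * B) * v
end

section
/- Let H be a bialgebra over a commutative ring, Δ its comultiplication, and Ω an invertible element of H ⊗ H satisfying (Ω ⊗ 1)·((Δ ⊗ id)(Ω)) = (1 ⊗ Ω)·((id ⊗ Δ)(Ω)). Let Δ_Ω(x) := Ω·Δ(x)·Ω⁻¹ be the twisted comultiplication. Then Ω⁻¹ is a 2-cocycle with respect to Δ_Ω, i.e. (Ω⁻¹ ⊗ 1)·((Δ_Ω ⊗ id)(Ω⁻¹)) = (1 ⊗ Ω⁻¹)·((id ⊗ Δ_Ω)(Ω⁻¹)); consequently twisting Δ_Ω by Ω⁻¹ returns the original comultiplication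 Δ. -/
set_option maxHeartbeats 1000000

open TensorProduct

/-- If `Ω` is an invertible 2-cocycle in `H ⊗ H` for a bialgebra `H`, with twisted
comultiplication `Δ_Ω(x) = Ω·Δ(x)·Ω⁻¹`, then `Ω⁻¹` is a 2-cocycle with respect to `Δ_Ω`,
and twisting `Δ_Ω` by `Ω⁻¹` gives back `Δ`. -/
theorem stmt13 {R H : Type*} [CommRing R] [Ring H] [Bialgebra R H]
    (Ω Ω' : H ⊗[R] H) (hΩ : Ω * Ω' = 1) (hΩ' : Ω' * Ω = 1)
    (hcoc : (Ω ⊗ₜ[R] (1 : H)) * (TensorProduct.map (Coalgebra.comul (R := R)) LinearMap.id) Ω =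
      (TensorProduct.assoc R H H H).symm ((1 : H) ⊗ₜ[R] Ω) *
        (TensorProduct.assoc R H H H).symm
          ((TensorProduct.map LinearMap.id (Coalgebra.comul (R := R))) Ω))
    (D : H →ₗ[R] H ⊗[R] H)
    (hD : ∀ x : H, D x = Ω * Coalgebra.comul (R := R) x * Ω') :
    ((Ω' ⊗ₜ[R] (1 : H)) * (TensorProduct.map D LinearMap.id) Ω' =
      (TensorProduct.assoc R H H H).symm ((1 : H) ⊗ₜ[R] Ω') *
        (TensorProduct.assoc R H H H).symm ((TensorProduct.map LinearMap.id D) Ω')) ∧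
    (∀ x : H, Ω' * D x * Ω = Coalgebra.comul (R := R) x) := by
  -- Bridging to algebra-hom versions
  have hF : (TensorProduct.map (Coalgebra.comul (R := R)) (LinearMap.id : H →ₗ[R] H)) =
      (Algebra.TensorProduct.map (Bialgebra.comulAlgHom R H) (AlgHom.id R H)).toLinearMap := rfl
  have hG : (TensorProduct.map (LinearMap.id : H →ₗ[R] H) (Coalgebra.comul (R := R))) =
      (Algebra.TensorProduct.map (AlgHom.id R H) (Bialgebra.comulAlgHom R H)).toLinearMap := rfl
  have hE : ∀ x : H ⊗[R] (H ⊗[R] H), (TensorProduct.assoc R H H H).symm x =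
      (Algebra.TensorProduct.assoc R R R H H H).symm x := fun x => rfl
  set F := Algebra.TensorProduct.map (Bialgebra.comulAlgHom R H) (AlgHom.id R H) with hFdef
  set G := Algebra.TensorProduct.map (AlgHom.id R H) (Bialgebra.comulAlgHom R H) with hGdef
  set E := (Algebra.TensorProduct.assoc R R R H H H).symm with hEdef
  -- map D id in terms of F
  have hMD : ∀ z : H ⊗[R] H, (TensorProduct.map D LinearMap.id) z
      = (Ω ⊗ₜ[R] (1 : H)) * F z * (Ω' ⊗ₜ[R] (1 : H)) := by
    intro z
    induction z using TensorProduct.induction_on with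
    | zero => simp
    | tmul a b =>
        simp only [TensorProduct.map_tmul, LinearMap.id_coe, id_eq, hD,
          hFdef, Algebra.TensorProduct.map_tmul, AlgHom.coe_id,
          Algebra.TensorProduct.tmul_mul_tmul, one_mul, mul_one]
        rfl
    | add x y hx hy =>
        simp only [map_add, hx, hy, mul_add, add_mul]
  -- map id D in terms of G
  have hND : ∀ z : H ⊗[R] H, (TensorProduct.map LinearMap.id D) z
      = ((1 : H) ⊗ₜ[R] Ω) * G z * ((1 : H) ⊗ₜ[R] Ω') := by
    intro z
    induction z using TensorProduct.induction_on with
    | zero => simp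
    | tmul a b =>
        simp only [TensorProduct.map_tmul, LinearMap.id_coe, id_eq, hD,
          hGdef, Algebra.TensorProduct.map_tmul, AlgHom.coe_id,
          Algebra.TensorProduct.tmul_mul_tmul, one_mul, mul_one]
        rfl
    | add x y hx hy =>
        simp only [map_add, hx, hy, mul_add, add_mul]
  -- rewrite hcoc
  rw [hF, hG] at hcoc
  simp only [hE, AlgHom.toLinearMap_apply] at hcoc ⊢
  have honeL : (Ω' ⊗ₜ[R] (1 : H)) * (Ω ⊗ₜ[R] (1 : H)) = 1 := by
    rw [Algebra.TensorProduct.tmul_mul_tmul, hΩ', one_mul]; rfl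
  have honeL' : (Ω ⊗ₜ[R] (1 : H)) * (Ω' ⊗ₜ[R] (1 : H)) = 1 := by
    rw [Algebra.TensorProduct.tmul_mul_tmul, hΩ, one_mul]; rfl
  have honeR : ((1 : H) ⊗ₜ[R] Ω') * ((1 : H) ⊗ₜ[R] Ω) = 1 := by
    rw [Algebra.TensorProduct.tmul_mul_tmul, hΩ', one_mul]; rfl
  have honeR' : ((1 : H) ⊗ₜ[R] Ω) * ((1 : H) ⊗ₜ[R] Ω') = 1 := by
    rw [Algebra.TensorProduct.tmul_mul_tmul, hΩ, one_mul]; rfl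
  -- the four key elements
  set A : (H ⊗[R] H) ⊗[R] H := (Ω ⊗ₜ[R] (1 : H)) * F Ω with hA
  set B : (H ⊗[R] H) ⊗[R] H := F Ω' * (Ω' ⊗ₜ[R] (1 : H)) with hB
  set C : (H ⊗[R] H) ⊗[R] H := E (G Ω') * E ((1 : H) ⊗ₜ[R] Ω') with hC
  have hFF : F Ω * F Ω' = 1 := by rw [← map_mul, hΩ, map_one]
  have hFF' : F Ω' * F Ω = 1 := by rw [← map_mul, hΩ', map_one]
  have hGG : G Ω * G Ω' = 1 := by rw [← map_mul, hΩ, map_one]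
  have hAB : A * B = 1 := by
    rw [hA, hB]
    calc (Ω ⊗ₜ[R] (1:H)) * F Ω * (F Ω' * (Ω' ⊗ₜ[R] (1:H)))
        = (Ω ⊗ₜ[R] (1:H)) * (F Ω * F Ω') * (Ω' ⊗ₜ[R] (1:H)) := by
          simp only [mul_assoc]
      _ = 1 := by rw [hFF, mul_one, honeL']
  have hBA : B * A = 1 := by
    rw [hA, hB]
    calc F Ω' * (Ω' ⊗ₜ[R] (1:H)) * ((Ω ⊗ₜ[R] (1:H)) * F Ω)
        = F Ω' * ((Ω' ⊗ₜ[R] (1:H)) * (Ω ⊗ₜ[R] (1:H))) * F Ω := by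
          simp only [mul_assoc]
      _ = 1 := by rw [honeL, mul_one, hFF']
  have hAC : A * C = 1 := by
    rw [hcoc, hC, ← map_mul, ← map_mul, ← map_mul]
    calc E (((1:H) ⊗ₜ[R] Ω) * G Ω * (G Ω' * ((1:H) ⊗ₜ[R] Ω')))
        = E (((1:H) ⊗ₜ[R] Ω) * (G Ω * G Ω') * ((1:H) ⊗ₜ[R] Ω')) := by
          simp only [mul_assoc]
      _ = 1 := by rw [hGG, mul_one, honeR', map_one]
  refine ⟨?_, ?_⟩
  · -- cocycle condition
    have key : B = C := by
      calc B = B * (A * C) := by rw [hAC, mul_one]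
        _ = (B * A) * C := (mul_assoc B A C).symm
        _ = C := by rw [hBA, one_mul]
    calc (Ω' ⊗ₜ[R] (1 : H)) * (TensorProduct.map D LinearMap.id) Ω'
        = (Ω' ⊗ₜ[R] (1:H)) * ((Ω ⊗ₜ[R] (1:H)) * F Ω' * (Ω' ⊗ₜ[R] (1:H))) := by
          rw [hMD Ω']
      _ = ((Ω' ⊗ₜ[R] (1:H)) * (Ω ⊗ₜ[R] (1:H))) * (F Ω' * (Ω' ⊗ₜ[R] (1:H))) := by
          simp only [mul_assoc]
      _ = B := by rw [honeL, one_mul, hB]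
      _ = C := key
      _ = E ((1:H) ⊗ₜ[R] Ω') * E ((TensorProduct.map LinearMap.id D) Ω') := by
          rw [hC, hND Ω', map_mul, map_mul]
          calc E (G Ω') * E ((1:H) ⊗ₜ[R] Ω')
              = (E ((1:H) ⊗ₜ[R] Ω') * E ((1:H) ⊗ₜ[R] Ω)) * (E (G Ω') * E ((1:H) ⊗ₜ[R] Ω')) := by
                have h1 : E ((1:H) ⊗ₜ[R] Ω') * E ((1:H) ⊗ₜ[R] Ω) = 1 := by
                  rw [← map_mul, honeR, map_one]
                rw [h1, one_mul]
            _ = E ((1:H) ⊗ₜ[R] Ω') * (E ((1:H) ⊗ₜ[R] Ω) * E (G Ω') * E ((1:H) ⊗ₜ[R] Ω')) := by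
                simp only [mul_assoc]
  · intro x
    rw [hD x, ← mul_assoc, ← mul_assoc, hΩ', one_mul, mul_assoc, hΩ', mul_one]
end

section
/- There exists a sequence (f_n) of continuous functions ℝ → ℝ vanishing at infinity with 0 ≤ f_n ≤ 1, f_n(0) = 0, and f_n(x) = 1 for all x with 1/n ≤ |x| ≤ n, such that: (1) for every continuous function g : ℝ → ℂ vanishing at infinity with g(0) = 0, the products f_n·g converge to g uniformly on ℝ; and (2) there exists a continuous function h : ℝ → ℂ vanishing at infinity such that f_n·h does not converge to h uniformly (indeed ‖f_n·h - h‖_∞ ≥ |h(0)| for all n, so any h with h(0) ≠ 0 works). -/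
open Filter

noncomputable def Fn (n : ℕ) (x : ℝ) : ℝ :=
  min (((n : ℝ) + 1) * |x|) (min 1 (max (((n : ℝ) + 2) - |x|) 0))

lemma Fn_cont (n : ℕ) : Continuous (Fn n) :=
  (continuous_const.mul continuous_abs).min
    (continuous_const.min ((continuous_const.sub continuous_abs).max continuous_const))

lemma Fn_nonneg (n : ℕ) (x : ℝ) : 0 ≤ Fn n x :=
  le_min (mul_nonneg (by positivity) (abs_nonneg x)) (le_min zero_le_one (le_max_right _ _))

lemma Fn_le_one (n : ℕ) (x : ℝ) : Fn n x ≤ 1 :=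
  le_trans (min_le_right _ _) (min_le_left _ _)

lemma Fn_zero (n : ℕ) : Fn n 0 = 0 := by
  simp [Fn]

lemma Fn_eq_one (n : ℕ) (x : ℝ) (h1 : 1 / ((n : ℝ) + 1) ≤ |x|) (h2 : |x| ≤ (n : ℝ) + 1) :
    Fn n x = 1 := by
  have hn : (0:ℝ) < (n:ℝ) + 1 := by positivity
  have ha : (1:ℝ) ≤ ((n:ℝ) + 1) * |x| := by
    rw [div_le_iff₀ hn] at h1
    linarith [mul_comm ((n:ℝ)+1) |x|]
  have hb : (1:ℝ) ≤ ((n:ℝ) + 2) - |x| := by linarith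
  exact le_antisymm (Fn_le_one n x)
    (le_min ha (le_min le_rfl (le_trans hb (le_max_left _ _))))

lemma Fn_eq_zero (n : ℕ) (x : ℝ) (h : (n : ℝ) + 2 ≤ |x|) : Fn n x = 0 := by
  rw [Fn, max_eq_right (by linarith), min_eq_right zero_le_one,
    min_eq_right (mul_nonneg (by positivity) (abs_nonneg x))]

lemma Fn_tendsto (n : ℕ) : Tendsto (Fn n) (cocompact ℝ) (nhds 0) := by
  have h : Fn n =ᶠ[cocompact ℝ] (fun _ => 0) := by
    refine mem_of_superset (mem_cocompact.2 ⟨Metric.closedBall 0 ((n:ℝ)+2),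
      isCompact_closedBall _ _, subset_rfl⟩) ?_
    intro x hx
    simp only [Set.mem_compl_iff, Metric.mem_closedBall, Real.dist_eq, sub_zero, not_le] at hx
    exact Fn_eq_zero n x hx.le

  exact Tendsto.congr' h.symm tendsto_const_nhds

/-- There is a sequence `(f_n)` in `C₀(ℝ)` with `0 ≤ f_n ≤ 1`, `f_n(0) = 0` and
`f_n ≡ 1` on `{1/n ≤ |x| ≤ n}`, such that `f_n·g → g` uniformly for every
`g ∈ C₀(ℝ)` with `g(0) = 0`, while for some `h ∈ C₀(ℝ)` (any `h` with `h(0) ≠ 0`)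
`f_n·h` does not converge uniformly to `h`. -/
theorem stmt15 :
    ∃ f : ℕ → ℝ → ℝ,
      (∀ n : ℕ, Continuous (f n) ∧ Tendsto (f n) (cocompact ℝ) (nhds 0) ∧
        (∀ x : ℝ, 0 ≤ f n x ∧ f n x ≤ 1) ∧ f n 0 = 0 ∧
        (∀ x : ℝ, 1 / ((n : ℝ) + 1) ≤ |x| → |x| ≤ (n : ℝ) + 1 → f n x = 1)) ∧
      (∀ g : ℝ → ℂ, Continuous g → Tendsto g (cocompact ℝ) (nhds 0) → g 0 = 0 →
        TendstoUniformly (fun n x => (f n x : ℂ) * g x) g atTop) ∧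
      (∃ h : ℝ → ℂ, Continuous h ∧ Tendsto h (cocompact ℝ) (nhds 0) ∧ h 0 ≠ 0 ∧
        (∀ n : ℕ, ‖h 0‖ ≤ ⨆ x : ℝ, ‖(f n x : ℂ) * h x - h x‖) ∧
        ¬ TendstoUniformly (fun n x => (f n x : ℂ) * h x) h atTop) := by
  refine ⟨Fn, fun n => ⟨Fn_cont n, Fn_tendsto n, fun x => ⟨Fn_nonneg n x, Fn_le_one n x⟩,
    Fn_zero n, fun x => Fn_eq_one n x⟩, ?_, ?_⟩
  · -- uniform convergence part
    intro g hg hgc hg0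
    rw [Metric.tendstoUniformly_iff]
    intro ε hε
    obtain ⟨δ, hδ, hδ'⟩ := Metric.continuous_iff.1 hg 0 ε hε
    have hmem : {x : ℝ | dist (g x) 0 < ε} ∈ cocompact ℝ :=
      hgc (Metric.ball_mem_nhds 0 hε)
    obtain ⟨K, hK, hKsub⟩ := mem_cocompact.1 hmem
    obtain ⟨R, hR⟩ := hK.isBounded.subset_closedBall 0
    obtain ⟨N, hN⟩ := exists_nat_gt (max R (1/δ))
    have hNR : R < (N:ℝ) := lt_of_le_of_lt (le_max_left _ _) hN
    have hNδ : 1/δ < (N:ℝ) := lt_of_le_of_lt (le_max_right _ _) hN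
    filter_upwards [eventually_ge_atTop N] with n hn x
    have hnN : (N:ℝ) ≤ (n:ℝ) := by exact_mod_cast hn
    by_cases hc : 1 / ((n : ℝ) + 1) ≤ |x| ∧ |x| ≤ (n : ℝ) + 1
    · rw [Fn_eq_one n x hc.1 hc.2]
      simp [hε]
    · have key : dist (g x) ((Fn n x : ℂ) * g x) ≤ ‖g x‖ := by
        rw [dist_eq_norm]
        have : g x - (Fn n x : ℂ) * g x = ((1 : ℂ) - (Fn n x : ℂ)) * g x := by ring
        rw [this]
        rw [norm_mul]
        have h1 : ‖(1 : ℂ) - (Fn n x : ℂ)‖ ≤ 1 := by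
          rw [show ((1:ℂ) - (Fn n x : ℂ)) = ((1 - Fn n x : ℝ) : ℂ) by push_cast; ring]
          rw [Complex.norm_real, Real.norm_eq_abs, abs_le]
          constructor <;> nlinarith [Fn_nonneg n x, Fn_le_one n x]
        calc ‖(1:ℂ) - (Fn n x : ℂ)‖ * ‖g x‖ ≤ 1 * ‖g x‖ :=
              mul_le_mul_of_nonneg_right h1 (norm_nonneg _)
          _ = ‖g x‖ := by rw [one_mul]
      have hsmall : ‖g x‖ < ε := by
        push_neg at hc
        by_cases hx : |x| < 1 / ((n : ℝ) + 1)
        · -- near zero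
          have hδpos : 0 < δ := hδ
          have h1 : 1 / ((n:ℝ)+1) < δ := by
            rw [div_lt_iff₀ (by positivity)]
            rw [div_lt_iff₀ hδpos] at hNδ
            nlinarith
          have : dist x 0 < δ := by
            rw [Real.dist_eq, sub_zero]; linarith
          have := hδ' x this
          rwa [hg0, dist_zero_right] at this
        · push_neg at hx
          have hx2 : (n:ℝ) + 1 < |x| := hc hx
          have hxK : x ∉ K := by
            intro hxK
            have := hR hxK
            rw [Metric.mem_closedBall, Real.dist_eq, sub_zero] at this
            have : |x| ≤ R := this
            linarith
          have := hKsub hxK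
          rwa [Set.mem_setOf_eq, dist_zero_right] at this
      exact lt_of_le_of_lt key hsmall
  · -- counterexample
    refine ⟨fun x => ((1 + x^2)⁻¹ : ℝ), ?_, ?_, ?_, ?_, ?_⟩
    · exact Complex.continuous_ofReal.comp
        ((continuous_const.add (continuous_pow 2)).inv₀ (fun x : ℝ => (by positivity : (1:ℝ) + x^2 ≠ 0)))
    · have h1 : Tendsto (fun x : ℝ => 1 + x^2) (cocompact ℝ) atTop := by
        apply tendsto_atTop_mono (fun x => ?_) tendsto_norm_cocompact_atTop
        rcases le_or_gt (|x|) 1 with h | h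
        · have : ‖x‖ = |x| := rfl
          nlinarith [sq_nonneg x, sq_abs x]
        · have : ‖x‖ = |x| := rfl
          nlinarith [sq_abs x]
      have h2 : Tendsto (fun x : ℝ => (1 + x^2)⁻¹) (cocompact ℝ) (nhds 0) :=
        tendsto_inv_atTop_zero.comp h1
      have h3 := (Complex.continuous_ofReal.tendsto 0).comp h2
      rw [Complex.ofReal_zero] at h3
      exact h3
    · norm_num
    · intro n
      have hb : BddAbove (Set.range fun x : ℝ =>
          ‖(Fn n x : ℂ) * ((1 + x^2)⁻¹ : ℝ) - ((1 + x^2)⁻¹ : ℝ)‖) := by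
        refine ⟨2, ?_⟩
        rintro y ⟨x, rfl⟩
        have h1 : ‖(Fn n x : ℂ) * ((1 + x^2)⁻¹ : ℝ) - ((1 + x^2)⁻¹ : ℝ)‖ ≤
            ‖(Fn n x : ℂ) * ((1 + x^2)⁻¹ : ℝ)‖ + ‖(((1 + x^2)⁻¹ : ℝ) : ℂ)‖ :=
          norm_sub_le _ _
        have h2 : ‖(((1 + x^2)⁻¹ : ℝ) : ℂ)‖ ≤ 1 := by
          rw [Complex.norm_real, Real.norm_eq_abs]
          rw [abs_of_nonneg (by positivity)]
          rw [inv_le_one_iff₀]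
          right; nlinarith [sq_nonneg x]
        have h3 : ‖(Fn n x : ℂ) * ((1 + x^2)⁻¹ : ℝ)‖ ≤ 1 := by
          rw [norm_mul, Complex.norm_real, Complex.norm_real, Real.norm_eq_abs, Real.norm_eq_abs,
            abs_of_nonneg (Fn_nonneg n x)]
          calc Fn n x * |(1 + x^2)⁻¹| ≤ 1 * 1 := by
                apply mul_le_mul (Fn_le_one n x) ?_ (abs_nonneg _) zero_le_one
                rw [abs_of_nonneg (by positivity), inv_le_one_iff₀]
                right; nlinarith [sq_nonneg x]
            _ = 1 := one_mul 1
        linarith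
      have := le_ciSup hb 0
      calc ‖(((1 + (0:ℝ)^2)⁻¹ : ℝ) : ℂ)‖
          = ‖(Fn n 0 : ℂ) * ((1 + (0:ℝ)^2)⁻¹ : ℝ) - ((1 + (0:ℝ)^2)⁻¹ : ℝ)‖ := by
            rw [Fn_zero]; simp
        _ ≤ _ := this
    · intro hcontra
      have hpt := hcontra.tendsto_at 0
      simp only [Fn_zero, Complex.ofReal_zero, zero_mul] at hpt
      have : ((((1:ℝ) + (0:ℝ)^2)⁻¹ : ℝ) : ℂ) = 0 :=
        tendsto_nhds_unique hpt tendsto_const_nhds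
      norm_num at this
end
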